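/- arXiv:2512.20762 — 2 statements merged into one kernel-verified Lean document; each statement's English description precedes it below -/
import Mathlib

section
/- Let Z and Z' be real random variables with densities f and g respectively, and suppose there exists c ≥ 0 such that f(z) ≥ g(z) whenever |z| < c and f(z) ≤ g(z) whenever |z| ≥ c. Let H(z) = -σ(z)·log σ(z) - σ(-z)·log σ(-z) where σ(z) = 1/(1+e^{-z}). Then E[H(Z)] ≥ E[H(Z')]. -/
open MeasureTheory

noncomputable def logistic (z : ℝ) : ℝ := 1 / (1 + Real.exp (-z))

noncomputable def entropyOfLogit (z : ℝ) : ℝ :=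
  -(logistic z * Real.log (logistic z)) - logistic (-z) * Real.log (logistic (-z))

lemma logistic_pos (z : ℝ) : 0 < logistic z := by
  unfold logistic
  positivity

lemma logistic_lt_one (z : ℝ) : logistic z < 1 := by
  unfold logistic
  rw [div_lt_one (by positivity)]
  linarith [Real.exp_pos (-z)]

lemma logistic_neg (z : ℝ) : logistic (-z) = 1 - logistic z := by
  unfold logistic
  have h1 : (0:ℝ) < 1 + Real.exp (-z) := by positivity
  have h2 : (0:ℝ) < 1 + Real.exp z := by positivity
  have key : Real.exp (-z) * Real.exp z = 1 := by
    rw [← Real.exp_add]; simp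
  field_simp
  nlinarith [key]

lemma entropyOfLogit_eq (z : ℝ) : entropyOfLogit z = Real.binEntropy (logistic z) := by
  rw [entropyOfLogit, Real.binEntropy, logistic_neg, Real.log_inv, Real.log_inv]
  ring

lemma logistic_monotone : StrictMono logistic := by
  intro a b hab
  unfold logistic
  apply div_lt_div_of_pos_left one_pos (by positivity)
  have := Real.exp_lt_exp.2 (neg_lt_neg hab)
  linarith

lemma logistic_zero : logistic 0 = 2⁻¹ := by
  norm_num [logistic]

lemma entropyOfLogit_even (z : ℝ) : entropyOfLogit (-z) = entropyOfLogit z := by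
  unfold entropyOfLogit
  rw [neg_neg]; ring

lemma entropyOfLogit_anti {a b : ℝ} (ha : 0 ≤ a) (hab : a ≤ b) :
    entropyOfLogit b ≤ entropyOfLogit a := by
  rw [entropyOfLogit_eq, entropyOfLogit_eq]
  have h0 : (2:ℝ)⁻¹ ≤ logistic a := by
    rw [← logistic_zero]; exact (logistic_monotone.le_iff_le).2 ha
  have h1 : logistic a ≤ logistic b := (logistic_monotone.le_iff_le).2 hab
  exact Real.binEntropy_strictAntiOn.antitoneOn
    ⟨h0, (logistic_lt_one a).le⟩ ⟨h0.trans h1, (logistic_lt_one b).le⟩ h1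

lemma entropyOfLogit_anti_abs {a b : ℝ} (hab : |a| ≤ |b|) :
    entropyOfLogit b ≤ entropyOfLogit a := by
  have ea : entropyOfLogit a = entropyOfLogit |a| := by
    rcases abs_choice a with h | h
    · rw [h]
    · rw [h, entropyOfLogit_even]
  have eb : entropyOfLogit b = entropyOfLogit |b| := by
    rcases abs_choice b with h | h
    · rw [h]
    · rw [h, entropyOfLogit_even]
  rw [ea, eb]
  exact entropyOfLogit_anti (abs_nonneg a) hab

lemma entropyOfLogit_bdd (z : ℝ) : ‖entropyOfLogit z‖ ≤ Real.log 2 := by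
  rw [Real.norm_eq_abs, abs_le]
  constructor
  · have := Real.binEntropy_nonneg (logistic_pos z).le (logistic_lt_one z).le
    rw [entropyOfLogit_eq]
    have : (0:ℝ) ≤ Real.log 2 := Real.log_nonneg one_le_two
    linarith [Real.binEntropy_nonneg (logistic_pos z).le (logistic_lt_one z).le]
  · rw [entropyOfLogit_eq]; exact Real.binEntropy_le_log_two

lemma entropyOfLogit_continuous : Continuous entropyOfLogit := by
  have hl : Continuous logistic := by
    unfold logistic
    exact continuous_const.div (by continuity) (fun z => by positivity)
  unfold entropyOfLogit
  have h1 : Continuous fun z : ℝ => logistic z * Real.log (logistic z) :=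
    hl.mul (hl.log fun z => (logistic_pos z).ne')
  have h2 : Continuous fun z : ℝ => logistic (-z) * Real.log (logistic (-z)) :=
    (hl.comp continuous_neg).mul ((hl.comp continuous_neg).log
      fun z => (logistic_pos (-z)).ne')
  exact h1.neg.sub h2

theorem expected_entropyOfLogit_ge
    (f g : ℝ → ℝ) (hf_meas : Measurable f) (hg_meas : Measurable g)
    (hf_nonneg : ∀ z, 0 ≤ f z) (hg_nonneg : ∀ z, 0 ≤ g z)
    (hf_prob : ∫ z, f z = 1) (hg_prob : ∫ z, g z = 1)
    (hf_int : Integrable f) (hg_int : Integrable g)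
    (c : ℝ) (hc : 0 ≤ c)
    (h_lt : ∀ z : ℝ, |z| < c → g z ≤ f z)
    (h_ge : ∀ z : ℝ, c ≤ |z| → f z ≤ g z) :
    ∫ z, entropyOfLogit z * g z ≤ ∫ z, entropyOfLogit z * f z := by
  set H := entropyOfLogit with hH
  have Hmeas : AEStronglyMeasurable H (volume : Measure ℝ) :=
    entropyOfLogit_continuous.aestronglyMeasurable
  have hbdd : ∃ C, ∀ x, ‖H x‖ ≤ C := ⟨Real.log 2, entropyOfLogit_bdd⟩
  have hHf : Integrable (fun z => H z * f z) := hf_int.bdd_mul Hmeas (ae_of_all _ entropyOfLogit_bdd)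
  have hHg : Integrable (fun z => H z * g z) := hg_int.bdd_mul Hmeas (ae_of_all _ entropyOfLogit_bdd)
  set Hc := H c with hHc
  have key : ∀ z, 0 ≤ (H z - Hc) * (f z - g z) := by
    intro z
    rcases lt_or_ge |z| c with h | h
    · have h1 : H c ≤ H z := by
        apply entropyOfLogit_anti_abs
        rw [abs_of_nonneg hc]; exact h.le
      have h2 := h_lt z h
      have : 0 ≤ H z - Hc := by simp [hHc]; linarith
      nlinarith
    · have h1 : H z ≤ H c := by
        apply entropyOfLogit_anti_abs
        rw [abs_of_nonneg hc]; exact h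
      have h2 := h_ge z h
      nlinarith
  have i1 : Integrable (fun z => H z * f z - H z * g z) := hHf.sub hHg
  have i2 : Integrable (fun z => Hc * f z - Hc * g z) :=
    (hf_int.const_mul Hc).sub (hg_int.const_mul Hc)
  have hint : Integrable (fun z => (H z - Hc) * (f z - g z)) := by
    have : (fun z => (H z - Hc) * (f z - g z)) =
        fun z => (H z * f z - H z * g z) - (Hc * f z - Hc * g z) := by
      funext z; ring
    rw [this]
    exact i1.sub i2
  have hnn : 0 ≤ ∫ z, (H z - Hc) * (f z - g z) := integral_nonneg key
  have hval : ∫ z, (H z - Hc) * (f z - g z) =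
      (∫ z, H z * f z) - (∫ z, H z * g z) := by
    have e : (fun z => (H z - Hc) * (f z - g z)) =
        fun z => (H z * f z - H z * g z) - (Hc * f z - Hc * g z) := by
      funext z; ring
    rw [e, integral_sub i1 i2,
      integral_sub hHf hHg, integral_sub (hf_int.const_mul Hc) (hg_int.const_mul Hc),
      MeasureTheory.integral_const_mul, MeasureTheory.integral_const_mul, hf_prob, hg_prob]
    ring
  linarith [hval ▸ hnn]
end

section
/- For the Cox partial likelihood rank probabilities r_k (probability that a test point x* with linear predictor β̂ᵀx* fails in rank position k among sorted uncensored core-group times t₁ < … < tₙ with linear predictors β̂ᵀxᵢ), the consecutive ratio satisfies r_{k+1}/r_k = ((1-δ_k)·e^{βᵀx*} + S_k) / (e^{βᵀx*} - e^{βᵀx_k} + S_k), where S_k = Σ_{i=k}^{n} e^{βᵀxᵢ} and δ_k is the failure indicator of unit k. In the uncensored case (all δᵢ = 1) this reads r_{k+1}/r_k = S_k / (e^{βᵀx*} - e^{βᵀx_k} + S_k). -/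
open Finset

/-- the linear predictors with the test point's predictor `vstar` inserted at rank `k`
(1-indexed) -/
noncomputable def insLin (v : ℕ → ℝ) (vstar : ℝ) (k i : ℕ) : ℝ :=
  if i < k then v i else if i = k then vstar else v (i - 1)

/-- the failure indicators with the test point's indicator (`true`) inserted at rank `k` -/
def insCens (δ : ℕ → Bool) (k i : ℕ) : Bool :=
  if i < k then δ i else if i = k then true else δ (i - 1)

/-- the Cox partial-likelihood probability that the test point fails in rank position `k`
among `n` sorted core-group event times (1-indexed) -/
noncomputable def rankProb (n : ℕ) (v : ℕ → ℝ) (δ : ℕ → Bool) (vstar : ℝ) (k : ℕ) : ℝ :=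
  ∏ i ∈ Finset.Icc 1 (n + 1),
    if insCens δ k i then
      Real.exp (insLin v vstar k i) / ∑ j ∈ Finset.Icc i (n + 1), Real.exp (insLin v vstar k j)
    else 1

private lemma sum_shift (v : ℕ → ℝ) (a b : ℕ) :
    ∑ j ∈ Icc (a + 1) (b + 1), Real.exp (v (j - 1)) = ∑ j ∈ Icc a b, Real.exp (v j) := by
  rw [← Finset.map_add_right_Icc a b 1, Finset.sum_map]
  simp [addRightEmbedding]

private lemma sum_ins_le (n k i : ℕ) (v : ℕ → ℝ) (vstar : ℝ)
    (hi : 1 ≤ i) (hik : i ≤ k) (hk : k ≤ n + 1) :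
    ∑ j ∈ Icc i (n + 1), Real.exp (insLin v vstar k j)
      = Real.exp vstar + ∑ j ∈ Icc i n, Real.exp (v j) := by
  obtain ⟨i, rfl⟩ : ∃ i', i = i' + 1 := ⟨i - 1, by omega⟩
  obtain ⟨k, rfl⟩ : ∃ k', k = k' + 1 := ⟨k - 1, by omega⟩
  have hik' : i ≤ k := by omega
  have hkn : k ≤ n := by omega
  rw [Finset.Icc_add_one_left_eq_Ioc, Finset.Icc_add_one_left_eq_Ioc,
    ← Finset.sum_Ioc_consecutive _ (hik'.trans (Nat.le_succ k)) (Nat.succ_le_succ hkn),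
    Finset.sum_Ioc_succ_top hik']
  have h1 : ∑ j ∈ Ioc i k, Real.exp (insLin v vstar (k + 1) j)
      = ∑ j ∈ Ioc i k, Real.exp (v j) := by
    refine Finset.sum_congr rfl fun j hj => ?_
    have := (Finset.mem_Ioc.mp hj).2
    simp [insLin, Nat.lt_succ_of_le this]
  have h2 : ∑ j ∈ Ioc (k + 1) (n + 1), Real.exp (insLin v vstar (k + 1) j)
      = ∑ j ∈ Ioc k n, Real.exp (v j) := by
    rw [← Finset.Icc_add_one_left_eq_Ioc, ← Finset.Icc_add_one_left_eq_Ioc]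
    rw [show (∑ j ∈ Icc (k + 1 + 1) (n + 1), Real.exp (insLin v vstar (k + 1) j))
        = ∑ j ∈ Icc (k + 1 + 1) (n + 1), Real.exp (v (j - 1)) from
      Finset.sum_congr rfl fun j hj => by
        have h := (Finset.mem_Icc.mp hj).1
        have h' : ¬ j < k + 1 := by omega
        have h'' : j ≠ k + 1 := by omega
        simp [insLin, h', h'']]
    exact sum_shift v (k + 1) n
  have h3 : insLin v vstar (k + 1) (k + 1) = vstar := by simp [insLin]
  rw [h1, h2, h3, ← Finset.sum_Ioc_consecutive (fun j => Real.exp (v j)) hik' hkn]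
  ring

private lemma sum_ins_gt (n k i : ℕ) (v : ℕ → ℝ) (vstar : ℝ) (hki : k < i) :
    ∑ j ∈ Icc i (n + 1), Real.exp (insLin v vstar k j)
      = ∑ j ∈ Icc (i - 1) n, Real.exp (v j) := by
  obtain ⟨i, rfl⟩ : ∃ i', i = i' + 1 := ⟨i - 1, by omega⟩
  simp only [Nat.add_sub_cancel]
  rw [show (∑ j ∈ Icc (i + 1) (n + 1), Real.exp (insLin v vstar k j))
      = ∑ j ∈ Icc (i + 1) (n + 1), Real.exp (v (j - 1)) from
    Finset.sum_congr rfl fun j hj => by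
      have h := (Finset.mem_Icc.mp hj).1
      have h' : ¬ j < k := by omega
      have h'' : j ≠ k := by omega
      simp [insLin, h', h'']]
  exact sum_shift v i n

/-- a single factor of the rank-probability product -/
private noncomputable def rpFac (n : ℕ) (v : ℕ → ℝ) (δ : ℕ → Bool) (vstar : ℝ) (k i : ℕ) : ℝ :=
  if insCens δ k i then
    Real.exp (insLin v vstar k i) / ∑ j ∈ Icc i (n + 1), Real.exp (insLin v vstar k j)
  else 1

private lemma rankProb_eq_prod (n : ℕ) (v : ℕ → ℝ) (δ : ℕ → Bool) (vstar : ℝ) (k : ℕ) :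
    rankProb n v δ vstar k = ∏ i ∈ Icc 1 (n + 1), rpFac n v δ vstar k i := rfl

theorem rankProb_succ_ratio (n : ℕ) (v : ℕ → ℝ) (δ : ℕ → Bool) (vstar : ℝ)
    (k : ℕ) (hk1 : 1 ≤ k) (hkn : k ≤ n) :
    (rankProb n v δ vstar (k + 1) / rankProb n v δ vstar k =
      ((if δ k then 0 else 1) * Real.exp vstar + ∑ i ∈ Finset.Icc k n, Real.exp (v i)) /
        (Real.exp vstar - Real.exp (v k) + ∑ i ∈ Finset.Icc k n, Real.exp (v i))) ∧
    ((∀ i, δ i = true) →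
      rankProb n v δ vstar (k + 1) / rankProb n v δ vstar k =
        (∑ i ∈ Finset.Icc k n, Real.exp (v i)) /
          (Real.exp vstar - Real.exp (v k) + ∑ i ∈ Finset.Icc k n, Real.exp (v i))) := by
  have hkmem : k ∈ Icc 1 (n + 1) := by rw [Finset.mem_Icc]; omega
  have hk1mem : k + 1 ∈ Icc 1 (n + 1) := by rw [Finset.mem_Icc]; omega
  have hk1mem' : k + 1 ∈ (Icc 1 (n + 1)).erase k :=
    Finset.mem_erase.mpr ⟨by omega, hk1mem⟩
  have hkmem' : k ∈ (Icc 1 (n + 1)).erase (k + 1) :=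
    Finset.mem_erase.mpr ⟨by omega, hkmem⟩
  set G := rpFac n v δ vstar with hG
  -- split the products
  have hsplitk : rankProb n v δ vstar k
      = G k k * (G k (k + 1) * ∏ i ∈ ((Icc 1 (n + 1)).erase k).erase (k + 1), G k i) := by
    rw [rankProb_eq_prod, ← Finset.mul_prod_erase _ _ hkmem, ← Finset.mul_prod_erase _ _ hk1mem']
  have hsplitk1 : rankProb n v δ vstar (k + 1)
      = G (k + 1) k *
        (G (k + 1) (k + 1) * ∏ i ∈ ((Icc 1 (n + 1)).erase k).erase (k + 1), G (k + 1) i) := by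
    rw [rankProb_eq_prod, ← Finset.mul_prod_erase _ _ hk1mem,
      ← Finset.mul_prod_erase _ _ hkmem', Finset.erase_right_comm]
    ring
  -- tails agree
  have hcongr : ∀ i ∈ ((Icc 1 (n + 1)).erase k).erase (k + 1), G (k + 1) i = G k i := by
    intro i hi
    have h1 : i ≠ k + 1 := (Finset.mem_erase.mp hi).1
    have h2 : i ≠ k := (Finset.mem_erase.mp (Finset.mem_erase.mp hi).2).1
    have h3 : i ∈ Icc 1 (n + 1) := (Finset.mem_erase.mp (Finset.mem_erase.mp hi).2).2
    have h4 : 1 ≤ i ∧ i ≤ n + 1 := Finset.mem_Icc.mp h3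
    rcases lt_or_gt_of_ne h2 with hlt | hgt
    · -- i < k : both denominators are E + ∑_{Icc i n}
      have d1 := sum_ins_le n k i v vstar h4.1 hlt.le (by omega)
      have d2 := sum_ins_le n (k + 1) i v vstar h4.1 (by omega) (by omega)
      have c1 : insCens δ k i = δ i := by unfold insCens; rw [if_pos hlt]
      have c2 : insCens δ (k + 1) i = δ i := by unfold insCens; rw [if_pos (by omega)]
      have l1 : insLin v vstar k i = v i := by unfold insLin; rw [if_pos hlt]
      have l2 : insLin v vstar (k + 1) i = v i := by unfold insLin; rw [if_pos (by omega)]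
      rw [hG]; unfold rpFac
      rw [d1, d2, c1, c2, l1, l2]
    · -- i > k + 1
      have hgt' : k + 1 < i := by omega
      have d1 := sum_ins_gt n k i v vstar (by omega)
      have d2 := sum_ins_gt n (k + 1) i v vstar hgt'
      have c1 : insCens δ k i = δ (i - 1) := by
        unfold insCens; rw [if_neg (by omega), if_neg (by omega)]
      have c2 : insCens δ (k + 1) i = δ (i - 1) := by
        unfold insCens; rw [if_neg (by omega), if_neg (by omega)]
      have l1 : insLin v vstar k i = v (i - 1) := by
        unfold insLin; rw [if_neg (by omega), if_neg (by omega)]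
      have l2 : insLin v vstar (k + 1) i = v (i - 1) := by
        unfold insLin; rw [if_neg (by omega), if_neg (by omega)]
      rw [hG]; unfold rpFac
      rw [d1, d2, c1, c2, l1, l2]
  have hPeq : ∏ i ∈ ((Icc 1 (n + 1)).erase k).erase (k + 1), G (k + 1) i
      = ∏ i ∈ ((Icc 1 (n + 1)).erase k).erase (k + 1), G k i :=
    Finset.prod_congr rfl hcongr
  have hSsplit : (∑ i ∈ Icc k n, Real.exp (v i))
      = Real.exp (v k) + ∑ i ∈ Icc (k + 1) n, Real.exp (v i) := by
    rw [Finset.Icc_eq_cons_Ioc hkn, Finset.sum_cons, Finset.Icc_add_one_left_eq_Ioc]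
  -- the four special factors
  have hGkk : G k k = Real.exp vstar /
      (Real.exp vstar + ∑ i ∈ Icc k n, Real.exp (v i)) := by
    have d := sum_ins_le n k k v vstar hk1 le_rfl (by omega)
    have c : insCens δ k k = true := by
      unfold insCens; rw [if_neg (by omega), if_pos rfl]
    have l : insLin v vstar k k = vstar := by
      unfold insLin; rw [if_neg (by omega), if_pos rfl]
    rw [hG]; unfold rpFac
    rw [d, c, l, if_pos rfl]
  have hGkk1 : G k (k + 1) =
      if δ k then Real.exp (v k) / (∑ i ∈ Icc k n, Real.exp (v i)) else 1 := by
    have d := sum_ins_gt n k (k + 1) v vstar (by omega)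
    simp only [Nat.add_sub_cancel] at d
    have c : insCens δ k (k + 1) = δ k := by
      unfold insCens; rw [if_neg (by omega), if_neg (by omega)]; simp
    have l : insLin v vstar k (k + 1) = v k := by
      unfold insLin; rw [if_neg (by omega), if_neg (by omega)]; simp
    rw [hG]; unfold rpFac
    rw [d, c, l]
  have hGk1k : G (k + 1) k =
      if δ k then Real.exp (v k) /
        (Real.exp vstar + ∑ i ∈ Icc k n, Real.exp (v i)) else 1 := by
    have d := sum_ins_le n (k + 1) k v vstar hk1 (by omega) (by omega)
    have c : insCens δ (k + 1) k = δ k := by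
      unfold insCens; rw [if_pos (by omega)]
    have l : insLin v vstar (k + 1) k = v k := by
      unfold insLin; rw [if_pos (by omega)]
    rw [hG]; unfold rpFac
    rw [d, c, l]
  have hGk1k1 : G (k + 1) (k + 1) = Real.exp vstar /
      (Real.exp vstar - Real.exp (v k) + ∑ i ∈ Icc k n, Real.exp (v i)) := by
    have d := sum_ins_le n (k + 1) (k + 1) v vstar (by omega) le_rfl (by omega)
    have c : insCens δ (k + 1) (k + 1) = true := by
      unfold insCens; rw [if_neg (by omega), if_pos rfl]
    have l : insLin v vstar (k + 1) (k + 1) = vstar := by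
      unfold insLin; rw [if_neg (by omega), if_pos rfl]
    rw [hG]; unfold rpFac
    rw [d, c, l, if_pos rfl]
    congr 1
    linarith [hSsplit]
  -- positivity
  have hEpos : (0:ℝ) < Real.exp vstar := Real.exp_pos _
  have hapos : (0:ℝ) < Real.exp (v k) := Real.exp_pos _
  have htailnn : (0:ℝ) ≤ ∑ i ∈ Icc (k + 1) n, Real.exp (v i) :=
    Finset.sum_nonneg fun i _ => (Real.exp_pos _).le
  have hSpos : (0:ℝ) < ∑ i ∈ Icc k n, Real.exp (v i) := by
    rw [hSsplit]; linarith
  have hDpos : (0:ℝ) < Real.exp vstar + ∑ i ∈ Icc k n, Real.exp (v i) := by linarith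
  have hD'pos : (0:ℝ) <
      Real.exp vstar - Real.exp (v k) + ∑ i ∈ Icc k n, Real.exp (v i) := by
    rw [hSsplit]; linarith
  have hPpos : 0 < ∏ i ∈ ((Icc 1 (n + 1)).erase k).erase (k + 1), G k i := by
    refine Finset.prod_pos fun i hi => ?_
    have h3 : i ∈ Icc 1 (n + 1) := (Finset.mem_erase.mp (Finset.mem_erase.mp hi).2).2
    have h4 : i ≤ n + 1 := (Finset.mem_Icc.mp h3).2
    rw [hG]; unfold rpFac
    split
    · exact div_pos (Real.exp_pos _)
        (Finset.sum_pos (fun j _ => Real.exp_pos _) (Finset.nonempty_Icc.mpr h4))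
    · exact one_pos
  have main : rankProb n v δ vstar (k + 1) / rankProb n v δ vstar k =
      ((if δ k then 0 else 1) * Real.exp vstar + ∑ i ∈ Finset.Icc k n, Real.exp (v i)) /
        (Real.exp vstar - Real.exp (v k) + ∑ i ∈ Finset.Icc k n, Real.exp (v i)) := by
    rw [hsplitk, hsplitk1, hPeq, hGkk, hGkk1, hGk1k, hGk1k1]
    cases hδ : δ k with
    | true =>
      simp only [hδ, if_true]
      rw [div_eq_div_iff (by positivity) (by positivity)]
      field_simp
      ring
    | false =>
      simp only [hδ, if_false, Bool.false_eq_true]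
      rw [div_eq_div_iff (by positivity) (by positivity)]
      field_simp
  refine ⟨main, fun h => ?_⟩
  rw [main, h k]
  simp
end
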